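/- Let λ > 0, δ ∈ (0, 1/2), T > 0, and let β : [0,T] → ℝ be a continuous function with β(0) = 0 that is δ-Hölder continuous with constant M, i.e. |β(t) − β(s)| ≤ M|t−s|^δ for all 0 ≤ s ≤ t ≤ T. Define W(t) = λ ∫₀ᵗ e^{−λ(t−s)} (β(t) − β(s)) ds + e^{−λt} β(t). Then for all t ∈ [0,T], |W(t)| ≤ λ^{−δ} (Γ(δ+1) + δ^δ e^{−δ}) M. -/

import Mathlib

open MeasureTheory Set intervalIntegral

/-- `x^δ * e^{-x}` is maximized at `x = δ`. -/
lemma aux_rpow_exp_le {δ x : ℝ} (hδ : 0 < δ) (hx : 0 ≤ x) :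
    x ^ δ * Real.exp (-x) ≤ δ ^ δ * Real.exp (-δ) := by
  rcases eq_or_lt_of_le hx with h | hx
  · rw [← h, Real.zero_rpow hδ.ne', zero_mul]
    positivity
  · have hlog : Real.log (x / δ) ≤ x / δ - 1 :=
      Real.log_le_sub_one_of_pos (by positivity)
    rw [Real.log_div hx.ne' hδ.ne'] at hlog
    have hkey : δ * Real.log x - x ≤ δ * Real.log δ - δ := by
      have := mul_le_mul_of_nonneg_left hlog hδ.le
      have hd : δ * (x / δ - 1) = x - δ := by field_simp
      nlinarith
    calc x ^ δ * Real.exp (-x) = Real.exp (δ * Real.log x - x) := by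
          rw [Real.rpow_def_of_pos hx, Real.exp_sub, Real.exp_neg, mul_comm (Real.log x),
            div_eq_mul_inv, ← Real.exp_neg]
      _ ≤ Real.exp (δ * Real.log δ - δ) := Real.exp_le_exp.mpr hkey
      _ = δ ^ δ * Real.exp (-δ) := by
          rw [Real.rpow_def_of_pos hδ, Real.exp_sub, Real.exp_neg δ, mul_comm (Real.log δ),
            div_eq_mul_inv, ← Real.exp_neg]

lemma aux_integrable {δ lam : ℝ} (hδ : 0 < δ) (hlam : 0 < lam) :
    IntegrableOn (fun u : ℝ => u ^ δ * Real.exp (-(lam * u))) (Ioi 0) := by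
  have h := Real.GammaIntegral_convergent (s := δ + 1) (by linarith)
  rw [show (0:ℝ) = lam * 0 by ring, ← integrableOn_Ioi_comp_mul_left_iff _ _ hlam] at h
  have h2 : IntegrableOn
      (fun x : ℝ => lam ^ (-δ) * (Real.exp (-(lam * x)) * (lam * x) ^ (δ + 1 - 1)))
      (Ioi 0) := h.const_mul _
  refine h2.congr_fun (fun x hx => ?_) measurableSet_Ioi
  have hx0 : (0:ℝ) < x := by simpa using hx
  have hl : lam ^ δ ≠ 0 := (Real.rpow_pos_of_pos hlam δ).ne'
  rw [add_sub_cancel_right]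
  beta_reduce
  rw [Real.mul_rpow hlam.le hx0.le, Real.rpow_neg hlam.le]
  field_simp

lemma aux_integral_le {δ lam t : ℝ} (hδ : 0 < δ) (hlam : 0 < lam) (ht : 0 ≤ t) :
    ∫ u in (0:ℝ)..t, u ^ δ * Real.exp (-(lam * u)) ≤ (1 / lam) ^ (δ + 1) * Real.Gamma (δ + 1) := by
  have hval := Real.integral_rpow_mul_exp_neg_mul_Ioi (a := δ + 1) (r := lam)
    (by linarith) hlam
  simp only [add_sub_cancel_right] at hval
  rw [← hval, intervalIntegral.integral_of_le ht]
  refine setIntegral_mono_set (aux_integrable hδ hlam) ?_ ?_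
  · filter_upwards [ae_restrict_mem measurableSet_Ioi] with x hx
    have hx0 : (0:ℝ) < x := hx
    positivity
  · exact HasSubset.Subset.eventuallyLE Ioc_subset_Ioi_self

theorem stmt_0 (lam δ T M : ℝ) (hlam : 0 < lam) (hδ : δ ∈ Set.Ioo (0:ℝ) (1/2))
    (hT : 0 < T) (β : ℝ → ℝ) (hβcont : ContinuousOn β (Set.Icc 0 T)) (hβ0 : β 0 = 0)
    (hHolder : ∀ s t : ℝ, 0 ≤ s → s ≤ t → t ≤ T → |β t - β s| ≤ M * (t - s) ^ δ)
    (W : ℝ → ℝ)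
    (hW : ∀ t, W t =
      lam * (∫ s in (0:ℝ)..t, Real.exp (-lam * (t - s)) * (β t - β s))
        + Real.exp (-lam * t) * β t) :
    ∀ t ∈ Set.Icc (0:ℝ) T,
      |W t| ≤ lam ^ (-δ) * (Real.Gamma (δ + 1) + δ ^ δ * Real.exp (-δ)) * M := by
  intro t ht
  obtain ⟨ht0, htT⟩ := ht
  have hδ0 : 0 < δ := hδ.1
  have hM : 0 ≤ M := by
    have h1 := hHolder 0 T le_rfl hT.le le_rfl
    have h2 : (0:ℝ) < (T - 0) ^ δ := Real.rpow_pos_of_pos (by linarith) δ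
    nlinarith [abs_nonneg (β T - β 0)]
  -- continuity of the rpow function
  have hrpow_cont : Continuous fun x : ℝ => x ^ δ :=
    continuous_iff_continuousAt.mpr fun x => Real.continuousAt_rpow_const x δ (Or.inr hδ0.le)
  -- integrability of f and g
  have hfc : ContinuousOn (fun s => Real.exp (-lam * (t - s)) * (β t - β s)) (Icc 0 t) := by
    refine ContinuousOn.mul (Continuous.continuousOn (by continuity)) ?_
    exact continuousOn_const.sub (hβcont.mono (Icc_subset_Icc le_rfl htT))
  have hfint : IntervalIntegrable (fun s => Real.exp (-lam * (t - s)) * (β t - β s))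
      volume 0 t := (hfc.mono (by rw [uIcc_of_le ht0])).intervalIntegrable
  have hgc : Continuous fun s : ℝ => Real.exp (-lam * (t - s)) * (M * (t - s) ^ δ) := by
    refine Continuous.mul (by continuity) (continuous_const.mul ?_)
    exact hrpow_cont.comp (continuous_const.sub continuous_id)
  have hgint : IntervalIntegrable (fun s : ℝ => Real.exp (-lam * (t - s)) * (M * (t - s) ^ δ))
      volume 0 t := hgc.intervalIntegrable 0 t
  -- bound the integral
  have hbound : |∫ s in (0:ℝ)..t, Real.exp (-lam * (t - s)) * (β t - β s)|
      ≤ |∫ s in (0:ℝ)..t, Real.exp (-lam * (t - s)) * (M * (t - s) ^ δ)| := by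
    rw [← Real.norm_eq_abs (∫ s in (0:ℝ)..t, Real.exp (-lam * (t - s)) * (β t - β s))]
    refine intervalIntegral.norm_integral_le_abs_of_norm_le ?_ hgint
    filter_upwards [ae_restrict_mem measurableSet_uIoc] with s hs
    rw [uIoc_of_le ht0] at hs
    have h1 : |β t - β s| ≤ M * (t - s) ^ δ := hHolder s t hs.1.le hs.2 htT
    rw [Real.norm_eq_abs, abs_mul, Real.abs_exp]
    exact mul_le_mul_of_nonneg_left h1 (Real.exp_pos _).le
  -- compute/bound the dominating integral
  have heq : (∫ s in (0:ℝ)..t, Real.exp (-lam * (t - s)) * (M * (t - s) ^ δ))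
      = M * ∫ u in (0:ℝ)..t, u ^ δ * Real.exp (-(lam * u)) := by
    rw [← intervalIntegral.integral_const_mul]
    have := intervalIntegral.integral_comp_sub_left
      (f := fun u => M * (u ^ δ * Real.exp (-(lam * u)))) (a := (0:ℝ)) (b := t) t
    simp only [sub_self, sub_zero] at this
    rw [← this]
    refine intervalIntegral.integral_congr fun s _ => ?_
    ring_nf
  have hInonneg : (0:ℝ) ≤ ∫ u in (0:ℝ)..t, u ^ δ * Real.exp (-(lam * u)) := by
    refine intervalIntegral.integral_nonneg ht0 fun u hu => ?_
    have := hu.1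
    positivity
  have hIle := aux_integral_le hδ0 hlam ht0
  -- second term bound
  have hβt : |β t| ≤ M * t ^ δ := by
    have := hHolder 0 t le_rfl ht0 htT
    simpa [hβ0] using this
  have hsecond : Real.exp (-lam * t) * |β t| ≤ lam ^ (-δ) * (δ ^ δ * Real.exp (-δ)) * M := by
    have h1 : Real.exp (-lam * t) * |β t| ≤ M * (t ^ δ * Real.exp (-(lam * t))) := by
      have := mul_le_mul_of_nonneg_left hβt (Real.exp_pos (-lam * t)).le
      calc Real.exp (-lam * t) * |β t| ≤ Real.exp (-lam * t) * (M * t ^ δ) := this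
        _ = M * (t ^ δ * Real.exp (-(lam * t))) := by rw [neg_mul]; ring
    have h2 : t ^ δ * Real.exp (-(lam * t)) ≤ lam ^ (-δ) * (δ ^ δ * Real.exp (-δ)) := by
      have h3 : (lam * t) ^ δ * Real.exp (-(lam * t)) ≤ δ ^ δ * Real.exp (-δ) :=
        aux_rpow_exp_le hδ0 (by positivity)
      rw [Real.mul_rpow hlam.le ht0] at h3
      have h4 : t ^ δ * Real.exp (-(lam * t))
          = lam ^ (-δ) * (lam ^ δ * t ^ δ * Real.exp (-(lam * t))) := by
        rw [Real.rpow_neg hlam.le]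
        have : lam ^ δ ≠ 0 := (Real.rpow_pos_of_pos hlam δ).ne'
        field_simp
      rw [h4]
      have h5 : lam ^ δ * t ^ δ * Real.exp (-(lam * t)) ≤ δ ^ δ * Real.exp (-δ) := by
        nlinarith [h3]
      exact mul_le_mul_of_nonneg_left h5 (Real.rpow_nonneg hlam.le _)
    calc Real.exp (-lam * t) * |β t| ≤ M * (t ^ δ * Real.exp (-(lam * t))) := h1
      _ ≤ M * (lam ^ (-δ) * (δ ^ δ * Real.exp (-δ))) := mul_le_mul_of_nonneg_left h2 hM
      _ = lam ^ (-δ) * (δ ^ δ * Real.exp (-δ)) * M := by ring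
  -- the scaling identity
  have hscale : lam * ((1 / lam) ^ (δ + 1) * Real.Gamma (δ + 1))
      = lam ^ (-δ) * Real.Gamma (δ + 1) := by
    have h1 : (1 / lam : ℝ) ^ (δ + 1) = lam ^ (-(δ + 1)) := by
      rw [one_div, Real.inv_rpow hlam.le, Real.rpow_neg hlam.le]
    have h2 : lam * lam ^ (-(δ + 1)) = lam ^ (-δ) := by
      have h3 := Real.rpow_add hlam 1 (-(δ + 1))
      rw [Real.rpow_one] at h3
      rw [← h3]
      norm_num
    rw [h1, ← mul_assoc, h2]
  -- combine
  rw [hW t]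
  calc |lam * (∫ s in (0:ℝ)..t, Real.exp (-lam * (t - s)) * (β t - β s))
        + Real.exp (-lam * t) * β t|
      ≤ |lam * (∫ s in (0:ℝ)..t, Real.exp (-lam * (t - s)) * (β t - β s))|
        + |Real.exp (-lam * t) * β t| := abs_add_le _ _
    _ = lam * |∫ s in (0:ℝ)..t, Real.exp (-lam * (t - s)) * (β t - β s)|
        + Real.exp (-lam * t) * |β t| := by
        rw [abs_mul, abs_mul, abs_of_pos hlam, Real.abs_exp]
    _ ≤ lam * (M * ∫ u in (0:ℝ)..t, u ^ δ * Real.exp (-(lam * u)))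
        + lam ^ (-δ) * (δ ^ δ * Real.exp (-δ)) * M := by
        refine add_le_add ?_ hsecond
        refine mul_le_mul_of_nonneg_left ?_ hlam.le
        calc |∫ s in (0:ℝ)..t, Real.exp (-lam * (t - s)) * (β t - β s)|
            ≤ |∫ s in (0:ℝ)..t, Real.exp (-lam * (t - s)) * (M * (t - s) ^ δ)| := hbound
          _ = M * ∫ u in (0:ℝ)..t, u ^ δ * Real.exp (-(lam * u)) := by
              rw [heq, abs_of_nonneg (by positivity)]
    _ ≤ lam * (M * ((1 / lam) ^ (δ + 1) * Real.Gamma (δ + 1)))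
        + lam ^ (-δ) * (δ ^ δ * Real.exp (-δ)) * M := by
        refine add_le_add_left (mul_le_mul_of_nonneg_left
          (mul_le_mul_of_nonneg_left hIle hM) hlam.le) _
    _ = lam ^ (-δ) * (Real.Gamma (δ + 1) + δ ^ δ * Real.exp (-δ)) * M := by
        have : lam * ((1/lam) ^ (δ+1) * Real.Gamma (δ+1)) = lam ^ (-δ) * Real.Gamma (δ+1) := hscale
        nlinarith [this]
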